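/- Let d ≥ 1 and let S ⊆ ℤ/dℤ be a subset with 2·|S| > d. Then there exists a unit vector g ∈ ℂ^d whose support supp(g) = {n : g_n ≠ 0} equals S and such that ⟨g, M^k T^ℓ g⟩ ≠ 0 for all (k,ℓ) ∈ (ℤ/dℤ)², i.e. rank(G(g)) = d². -/

import Mathlib

open Complex Finset

noncomputable section

/-- `gw d` is the primitive `d`-th root of unity `ω = exp(2πi/d)`. -/
def gw (d : ℕ) : ℂ := Complex.exp (2 * Real.pi * Complex.I / d)

/-- `modT d k l g = M^k T^ℓ g`, where `(Mg)_n = ω^n g_n` and `(Tg)_n = g_{n-1}`. -/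
def modT (d : ℕ) (k l : ZMod d) (g : ZMod d → ℂ) : ZMod d → ℂ :=
  fun n => gw d ^ (k.val * n.val) * g (n - l)

/-- `inn d x y = ⟨x,y⟩ = Σ_n x_n conj(y_n)`. -/
def inn (d : ℕ) [NeZero d] (x y : ZMod d → ℂ) : ℂ :=
  ∑ n : ZMod d, x n * (starRingEnd ℂ) (y n)

/-- The `d² × d²` Gram matrix `G(g)` with entries `|⟨M^k T^ℓ g, M^{k'} T^{ℓ'} g⟩|²`. -/
def Gmat (d : ℕ) [NeZero d] (g : ZMod d → ℂ) :
    Matrix (ZMod d × ZMod d) (ZMod d × ZMod d) ℂ :=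
  fun p q =>
    ((‖inn d (modT d p.1 p.2 g) (modT d q.1 q.2 g)‖ ^ 2 : ℝ) : ℂ)

set_option linter.unusedSectionVars false
set_option maxHeartbeats 1600000

section Aux
open Polynomial Matrix

variable (d : ℕ) [NeZero d]

def chi (a : ZMod d) : ℂ := gw d ^ a.val

lemma gw_ne_zero : gw d ≠ 0 := Complex.exp_ne_zero _

lemma gw_prim : IsPrimitiveRoot (gw d) d :=
  Complex.isPrimitiveRoot_exp d (NeZero.ne d)

lemma gw_pow_d : gw d ^ d = 1 := (gw_prim d).pow_eq_one

lemma gw_pow_mod (m : ℕ) : gw d ^ m = gw d ^ (m % d) := by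
  conv_lhs => rw [← Nat.mod_add_div m d, pow_add, pow_mul, gw_pow_d, one_pow, mul_one]

lemma chi_zero : chi d 0 = 1 := by simp [chi, ZMod.val_zero]

lemma chi_add (a b : ZMod d) : chi d (a + b) = chi d a * chi d b := by
  rw [chi, chi, chi, ← pow_add, ZMod.val_add, ← gw_pow_mod]

lemma chi_ne_zero (a : ZMod d) : chi d a ≠ 0 := pow_ne_zero _ (gw_ne_zero d)

lemma chi_mul_val (k n : ZMod d) : gw d ^ (k.val * n.val) = chi d (k * n) := by
  rw [chi, ZMod.val_mul, ← gw_pow_mod]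

lemma chi_neg (a : ZMod d) : chi d (-a) = (chi d a)⁻¹ := by
  have h : chi d a * chi d (-a) = 1 := by
    rw [← chi_add]; simp [chi_zero]
  field_simp [chi_ne_zero] at h ⊢
  rw [← h]

lemma conj_gw : (starRingEnd ℂ) (gw d) = (gw d)⁻¹ := by
  rw [gw, ← Complex.exp_conj, ← Complex.exp_neg]
  congr 1
  simp only [map_div₀, _root_.map_mul, Complex.conj_I, Complex.conj_ofNat, Complex.conj_ofReal,
    map_natCast]
  ring

lemma conj_chi (a : ZMod d) : (starRingEnd ℂ) (chi d a) = chi d (-a) := by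
  rw [chi, map_pow, conj_gw, inv_pow, chi_neg, chi]

lemma abs_chi (a : ZMod d) : ‖chi d a‖ = 1 := by
  have : ‖gw d‖ = 1 := by
    have : (2 * Real.pi * Complex.I / d) = ((2 * Real.pi / d : ℝ) : ℂ) * Complex.I := by
      push_cast; ring
    rw [gw, this, Complex.norm_exp_ofReal_mul_I]
  rw [chi, norm_pow, this, one_pow]

lemma chi_one_iff (a : ZMod d) : chi d a = 1 ↔ a = 0 := by
  constructor
  · intro h
    have := ((gw_prim d).pow_eq_one_iff_dvd a.val).mp h
    have hlt := ZMod.val_lt a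
    have hv : a.val = 0 := Nat.eq_zero_of_dvd_of_lt this hlt
    exact (ZMod.val_eq_zero a).mp hv
  · intro h; rw [h, chi_zero]

lemma chi_sum (c : ZMod d) : (∑ x : ZMod d, chi d (c * x)) = if c = 0 then (d : ℂ) else 0 := by
  split_ifs with hc
  · simp [hc, chi_zero, ZMod.card]
  · have h1 : chi d c ≠ 1 := by
      intro h; exact hc ((chi_one_iff d c).mp h)
    have key : chi d c * (∑ x : ZMod d, chi d (c * x)) = ∑ x : ZMod d, chi d (c * x) := by
      rw [Finset.mul_sum]
      refine Fintype.sum_equiv (Equiv.addRight (1 : ZMod d)) _ _ (fun x => ?_)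
      rw [← chi_add]
      congr 1
      simp [Equiv.coe_addRight]
      ring
    have := sub_eq_zero.mpr key
    have h2 : (chi d c - 1) * (∑ x : ZMod d, chi d (c * x)) = 0 := by
      rw [sub_mul, one_mul, this]
    rcases mul_eq_zero.mp h2 with h | h
    · exact absurd (sub_eq_zero.mp h) h1
    · exact h

variable (g : ZMod d → ℂ)

def Af (k l : ZMod d) : ℂ := inn d g (modT d k l g)

lemma Af_eq (k l : ZMod d) :
    Af d g k l = ∑ n : ZMod d, chi d (-(k * n)) * (g n * (starRingEnd ℂ) (g (n - l))) := by
  unfold Af inn modT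
  refine Finset.sum_congr rfl (fun n _ => ?_)
  rw [_root_.map_mul, chi_mul_val, conj_chi]
  ring

lemma inn_shift (k l k' l' : ZMod d) :
    inn d (modT d k l g) (modT d k' l' g)
      = chi d ((k - k') * l) * Af d g (k' - k) (l' - l) := by
  rw [Af_eq]
  unfold inn modT
  have step1 : ∀ n : ZMod d,
      gw d ^ (k.val * n.val) * g (n - l) *
        (starRingEnd ℂ) (gw d ^ (k'.val * n.val) * g (n - l'))
      = chi d ((k - k') * n) * (g (n - l) * (starRingEnd ℂ) (g (n - l'))) := by
    intro n
    rw [_root_.map_mul, chi_mul_val, chi_mul_val, conj_chi]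
    have : chi d (k * n) * chi d (-(k' * n)) = chi d ((k - k') * n) := by
      rw [← chi_add]; ring_nf
    rw [← this]; ring
  rw [Finset.sum_congr rfl (fun n _ => step1 n)]
  rw [Finset.mul_sum]
  refine Fintype.sum_equiv (Equiv.subRight l) _ _ (fun n => ?_)
  simp only [Equiv.subRight_apply]
  have h1 : chi d ((k - k') * n) = chi d ((k-k')*l) * chi d (-((k' - k) * (n - l))) := by
    rw [← chi_add]; ring_nf
  have h3 : (n - l) - (l' - l) = n - l' := by ring
  rw [h1, h3]
  ring

-- f(r) = |A(r)|² as a complex number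
def Hf (r : ZMod d × ZMod d) : ℂ := Af d g r.1 r.2 * (starRingEnd ℂ) (Af d g r.1 r.2)

lemma Gmat_eq (p q : ZMod d × ZMod d) : Gmat d g p q = Hf d g (q - p) := by
  unfold Gmat Hf
  rw [inn_shift, norm_mul, abs_chi, one_mul]
  have h1 : (q - p).1 = q.1 - p.1 := rfl
  have h2 : (q - p).2 = q.2 - p.2 := rfl
  rw [h1, h2, Complex.sq_norm, ← Complex.mul_conj]

def Umat : Matrix (ZMod d × ZMod d) (ZMod d × ZMod d) ℂ :=
  fun p r => chi d (p.1 * r.1 + p.2 * r.2)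

lemma UhU : (Umat d)ᴴ * (Umat d) = ((d : ℂ)^2) • (1 : Matrix (ZMod d × ZMod d) (ZMod d × ZMod d) ℂ) := by
  ext r r'
  rw [Matrix.mul_apply]
  have h1 : ∀ p : ZMod d × ZMod d,
      (Umat d)ᴴ r p * Umat d p r'
        = chi d ((r'.1 - r.1) * p.1) * chi d ((r'.2 - r.2) * p.2) := by
    intro p
    rw [Matrix.conjTranspose_apply]
    show star (chi d (p.1 * r.1 + p.2 * r.2)) * chi d (p.1 * r'.1 + p.2 * r'.2) = _
    rw [show star (chi d (p.1 * r.1 + p.2 * r.2)) = chi d (-(p.1 * r.1 + p.2 * r.2)) from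
      conj_chi d _, ← chi_add, ← chi_add]
    congr 1
    ring
  rw [Finset.sum_congr rfl (fun p _ => h1 p)]
  rw [Fintype.sum_prod_type]
  show (∑ x : ZMod d, ∑ y : ZMod d, chi d ((r'.1 - r.1) * x) * chi d ((r'.2 - r.2) * y)) = _
  rw [← Finset.sum_mul_sum, chi_sum, chi_sum]
  rw [Matrix.smul_apply, Matrix.one_apply]
  by_cases h : r = r'
  · have e1 : r'.1 - r.1 = 0 := by rw [h]; ring
    have e2 : r'.2 - r.2 = 0 := by rw [h]; ring
    simp [e1, e2, h]
    ring
  · have : r'.1 - r.1 ≠ 0 ∨ r'.2 - r.2 ≠ 0 := by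
      by_contra hc
      push_neg at hc
      apply h
      have u1 : r.1 = r'.1 := by have := hc.1; linear_combination -this
      have u2 : r.2 = r'.2 := by have := hc.2; linear_combination -this
      exact Prod.ext u1 u2
    rcases this with h' | h' <;> simp [h', h, if_neg]

lemma detU_ne : (Umat d).det ≠ 0 := by
  intro h
  have h2 := congrArg Matrix.det (UhU d)
  rw [Matrix.det_mul, h, mul_zero, Matrix.det_smul, Matrix.det_one, mul_one] at h2
  have hd : (d : ℂ) ≠ 0 := Nat.cast_ne_zero.mpr (NeZero.ne d)
  exact (pow_ne_zero _ (pow_ne_zero _ hd)) h2.symm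

def lamv (r : ZMod d × ZMod d) : ℂ := ∑ s : ZMod d × ZMod d, Hf d g s * Umat d s r

lemma GU : Gmat d g * Umat d = Umat d * Matrix.diagonal (lamv d g) := by
  ext p r
  rw [Matrix.mul_apply, Matrix.mul_diagonal]
  have h1 : ∀ q, Gmat d g p q * Umat d q r = (Hf d g (q - p) * Umat d (q - p) r) * Umat d p r := by
    intro q
    rw [Gmat_eq, mul_assoc]
    congr 1
    show chi d (q.1 * r.1 + q.2 * r.2)
        = chi d ((q-p).1 * r.1 + (q-p).2 * r.2) * chi d (p.1 * r.1 + p.2 * r.2)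
    rw [← chi_add]
    congr 1
    have e1 : (q - p).1 = q.1 - p.1 := rfl
    have e2 : (q - p).2 = q.2 - p.2 := rfl
    rw [e1, e2]
    ring
  have h2 : ∑ q : ZMod d × ZMod d, Hf d g (q - p) * Umat d (q - p) r
      = ∑ s : ZMod d × ZMod d, Hf d g s * Umat d s r :=
    Fintype.sum_equiv (Equiv.subRight p) _ _ (fun q => rfl)
  rw [Finset.sum_congr rfl (fun q _ => h1 q), ← Finset.sum_mul, h2]
  exact mul_comm _ _

lemma conjAf (k l : ZMod d) :
    (starRingEnd ℂ) (Af d g k l)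
      = ∑ m : ZMod d, chi d (k * m) * ((starRingEnd ℂ) (g m) * g (m - l)) := by
  rw [Af_eq, map_sum]
  refine Finset.sum_congr rfl (fun m _ => ?_)
  rw [_root_.map_mul, _root_.map_mul, conj_chi, neg_neg, Complex.conj_conj]

lemma lam_eq (a b : ZMod d) :
    lamv d g (a, b) = d * (Af d g (-b) a * (starRingEnd ℂ) (Af d g (-b) a)) := by
  classical
  have expand : ∀ k l : ZMod d,
      Hf d g (k, l) * Umat d (k, l) (a, b)
        = ∑ n : ZMod d, ∑ m : ZMod d,
            chi d ((m - n + a) * k) * (chi d (b * l) *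
              ((g n * (starRingEnd ℂ) (g (n - l))) * ((starRingEnd ℂ) (g m) * g (m - l)))) := by
    intro k l
    show Af d g k l * (starRingEnd ℂ) (Af d g k l) * chi d (k * a + l * b) = _
    rw [conjAf, Af_eq, Finset.sum_mul_sum, Finset.sum_mul]
    refine Finset.sum_congr rfl (fun n _ => ?_)
    rw [Finset.sum_mul]
    refine Finset.sum_congr rfl (fun m _ => ?_)
    have key : chi d (-(k*n)) * chi d (k*m) * chi d (k*a + l*b)
        = chi d ((m - n + a) * k) * chi d (b * l) := by
      rw [← chi_add, ← chi_add, ← chi_add]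
      congr 1
      ring
    linear_combination ((g n * (starRingEnd ℂ) (g (n - l))) *
      ((starRingEnd ℂ) (g m) * g (m - l))) * key
  -- reduce to quadruple sum with k innermost
  have step1 : lamv d g (a, b)
      = ∑ l : ZMod d, ∑ n : ZMod d, ∑ m : ZMod d, ∑ k : ZMod d,
          chi d ((m - n + a) * k) * (chi d (b * l) *
            ((g n * (starRingEnd ℂ) (g (n - l))) * ((starRingEnd ℂ) (g m) * g (m - l)))) := by
    show (∑ s : ZMod d × ZMod d, Hf d g s * Umat d s (a, b)) = _
    rw [Fintype.sum_prod_type]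
    rw [Finset.sum_congr rfl (fun k _ => Finset.sum_congr rfl (fun l _ => expand k l))]
    rw [Finset.sum_comm]
    refine Finset.sum_congr rfl (fun l _ => ?_)
    rw [Finset.sum_comm]
    refine Finset.sum_congr rfl (fun n _ => ?_)
    rw [Finset.sum_comm]
  -- kill the k sum and the m sum
  have step2 : lamv d g (a, b)
      = ∑ l : ZMod d, ∑ n : ZMod d,
          (d : ℂ) * (chi d (b * l) *
            ((g n * (starRingEnd ℂ) (g (n - l))) *
              ((starRingEnd ℂ) (g (n - a)) * g (n - a - l)))) := by
    rw [step1]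
    refine Finset.sum_congr rfl (fun l _ => Finset.sum_congr rfl (fun n _ => ?_))
    have inner : ∀ m : ZMod d,
        (∑ k : ZMod d, chi d ((m - n + a) * k) * (chi d (b * l) *
            ((g n * (starRingEnd ℂ) (g (n - l))) * ((starRingEnd ℂ) (g m) * g (m - l)))))
        = (if m = n - a then (d:ℂ) else 0) * (chi d (b * l) *
            ((g n * (starRingEnd ℂ) (g (n - l))) * ((starRingEnd ℂ) (g m) * g (m - l)))) := by
      intro m
      rw [← Finset.sum_mul, chi_sum]
      congr 1
      have : (m - n + a = 0) ↔ (m = n - a) := by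
        constructor
        · intro h; linear_combination h
        · intro h; rw [h]; ring
      simp [this]
    rw [Finset.sum_congr rfl (fun m _ => inner m)]
    have : ∀ m : ZMod d, (if m = n - a then (d:ℂ) else 0) * (chi d (b * l) *
            ((g n * (starRingEnd ℂ) (g (n - l))) * ((starRingEnd ℂ) (g m) * g (m - l))))
        = if m = n - a then (d:ℂ) * (chi d (b * l) *
            ((g n * (starRingEnd ℂ) (g (n - l))) * ((starRingEnd ℂ) (g m) * g (m - l)))) else 0 := by
      intro m
      split_ifs <;> simp
    rw [Finset.sum_congr rfl (fun m _ => this m), Finset.sum_ite_eq' Finset.univ (n - a)]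
    simp
  -- reindex l = n - p and factor
  have step3 : lamv d g (a, b)
      = (d : ℂ) * ((∑ n : ZMod d, chi d (b * n) * (g n * (starRingEnd ℂ) (g (n - a)))) *
          (∑ p : ZMod d, chi d (-(b * p)) * ((starRingEnd ℂ) (g p) * g (p - a)))) := by
    have per_n : ∀ n : ZMod d,
        (∑ l : ZMod d, (d:ℂ) * (chi d (b * l) *
            ((g n * (starRingEnd ℂ) (g (n - l))) * ((starRingEnd ℂ) (g (n - a)) * g (n - a - l)))))
        = ∑ p : ZMod d, (d:ℂ) * ((chi d (b * n) * (g n * (starRingEnd ℂ) (g (n - a)))) *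
            (chi d (-(b * p)) * ((starRingEnd ℂ) (g p) * g (p - a)))) := by
      intro n
      refine Fintype.sum_equiv (Equiv.subLeft n) _ _ (fun l => ?_)
      simp only [Equiv.subLeft_apply]
      have harg : n - a - l = (n - l) - a := by ring
      have key : chi d (b * l) = chi d (b * n) * chi d (-(b * (n - l))) := by
        rw [← chi_add]
        congr 1
        ring
      rw [harg, key]
      ring
    have rhs : (d : ℂ) * ((∑ n : ZMod d, chi d (b * n) * (g n * (starRingEnd ℂ) (g (n - a)))) *
          (∑ p : ZMod d, chi d (-(b * p)) * ((starRingEnd ℂ) (g p) * g (p - a))))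
        = ∑ n : ZMod d, ∑ p : ZMod d, (d:ℂ) *
            ((chi d (b * n) * (g n * (starRingEnd ℂ) (g (n - a)))) *
              (chi d (-(b * p)) * ((starRingEnd ℂ) (g p) * g (p - a)))) := by
      rw [Finset.sum_mul_sum, Finset.mul_sum]
      exact Finset.sum_congr rfl (fun n _ => by rw [Finset.mul_sum])
    rw [step2, Finset.sum_comm, rhs]
    exact Finset.sum_congr rfl (fun n _ => per_n n)
  rw [step3, conjAf, Af_eq]
  have e1 : ∀ n : ZMod d, chi d (-(-b * n)) = chi d (b * n) := by
    intro n; congr 1; ring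
  have e2 : ∀ m : ZMod d, chi d (-b * m) = chi d (-(b * m)) := by
    intro m; congr 1; ring
  simp only [e1, e2]

lemma rank_full (hA : ∀ k l : ZMod d, Af d g k l ≠ 0) : (Gmat d g).rank = d ^ 2 := by
  have hlam : ∀ r : ZMod d × ZMod d, lamv d g r ≠ 0 := by
    intro r
    have h := lam_eq d g r.1 r.2
    have hd : (d:ℂ) ≠ 0 := Nat.cast_ne_zero.mpr (NeZero.ne d)
    have : lamv d g r = lamv d g (r.1, r.2) := by rw [Prod.mk.eta]
    rw [this, h]
    exact mul_ne_zero hd (mul_ne_zero (hA _ _) (star_ne_zero.mpr (hA _ _)))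
  have hdet : (Gmat d g).det ≠ 0 := by
    have h := congrArg Matrix.det (GU d g)
    rw [Matrix.det_mul, Matrix.det_mul, Matrix.det_diagonal] at h
    have hD : (∏ r : ZMod d × ZMod d, lamv d g r) ≠ 0 :=
      Finset.prod_ne_zero_iff.mpr (fun r _ => hlam r)
    intro h0
    rw [h0, zero_mul] at h
    exact (mul_ne_zero (detU_ne d) hD) h.symm
  have hu : IsUnit (Gmat d g) :=
    (Matrix.isUnit_iff_isUnit_det _).mpr (isUnit_iff_ne_zero.mpr hdet)
  rw [Matrix.rank_of_isUnit _ hu, Fintype.card_prod, ZMod.card, sq]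

lemma three_zero_case (b c e : ℕ) (h : 1 + 3^b = 3^c + 3^e) :
    (0 = c ∧ b = e) ∨ (0 = e ∧ b = c) := by
  have h3 : ∀ x : ℕ, 1 ≤ x → (3:ℕ) ∣ 3^x := fun x hx => dvd_pow_self 3 (by omega)
  have hmono : ∀ x : ℕ, 1 ≤ x → (3:ℕ) ≤ 3^x := fun x hx => by
    calc (3:ℕ) = 3^1 := by norm_num
    _ ≤ 3^x := Nat.pow_le_pow_right (by norm_num) hx
  have hinj : Function.Injective (fun x : ℕ => (3:ℕ)^x) :=
    fun x y hxy => Nat.pow_right_injective (by norm_num) hxy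
  rcases Nat.eq_zero_or_pos b with hb | hb
  · subst hb
    simp only [pow_zero] at h
    have hc : c = 0 := by
      by_contra hc
      have := hmono c (by omega)
      have := Nat.one_le_two_pow (n := e)
      have : 1 ≤ 3^e := Nat.one_le_pow _ _ (by norm_num)
      omega
    subst hc
    simp only [pow_zero] at h
    have he : e = 0 := by
      by_contra he
      have := hmono e (by omega)
      omega
    subst he
    exact Or.inl ⟨rfl, rfl⟩
  · rcases Nat.eq_zero_or_pos c with hc | hc
    · subst hc
      simp only [pow_zero] at h
      have : 3^b = 3^e := by omega
      exact Or.inl ⟨rfl, hinj this⟩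
    · rcases Nat.eq_zero_or_pos e with he | he
      · subst he
        simp only [pow_zero] at h
        have : 3^b = 3^c := by omega
        exact Or.inr ⟨rfl, hinj this⟩
      · exfalso
        have d1 := h3 b hb
        have d2 := h3 c hc
        have d3 := h3 e he
        omega

lemma three_pow_add : ∀ N a b c e : ℕ, a + b + c + e ≤ N → 3^a + 3^b = 3^c + 3^e →
    (a = c ∧ b = e) ∨ (a = e ∧ b = c) := by
  intro N
  induction N with
  | zero =>
    intro a b c e hle _
    have : a = 0 ∧ b = 0 ∧ c = 0 ∧ e = 0 := by omega
    obtain ⟨rfl, rfl, rfl, rfl⟩ := this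
    exact Or.inl ⟨rfl, rfl⟩
  | succ N ih =>
    intro a b c e hle h
    rcases Nat.eq_zero_or_pos a with ha | ha
    · subst ha
      rw [pow_zero] at h
      exact three_zero_case b c e h
    rcases Nat.eq_zero_or_pos b with hb | hb
    · subst hb
      rw [pow_zero] at h
      rcases three_zero_case a c e (by omega) with ⟨h1, h2⟩ | ⟨h1, h2⟩
      · exact Or.inr ⟨h2, h1⟩
      · exact Or.inl ⟨h2, h1⟩
    rcases Nat.eq_zero_or_pos c with hc | hc
    · subst hc
      rw [pow_zero] at h
      rcases three_zero_case e a b (by omega) with ⟨h1, h2⟩ | ⟨h1, h2⟩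
      · exact absurd h1.symm (by omega)
      · exact absurd h1.symm (by omega)
    rcases Nat.eq_zero_or_pos e with he | he
    · subst he
      rw [pow_zero] at h
      rcases three_zero_case c a b (by omega) with ⟨h1, h2⟩ | ⟨h1, h2⟩
      · exact absurd h1.symm (by omega)
      · exact absurd h1.symm (by omega)
    · obtain ⟨a', rfl⟩ : ∃ a', a = a' + 1 := ⟨a - 1, by omega⟩
      obtain ⟨b', rfl⟩ : ∃ b', b = b' + 1 := ⟨b - 1, by omega⟩
      obtain ⟨c', rfl⟩ : ∃ c', c = c' + 1 := ⟨c - 1, by omega⟩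
      obtain ⟨e', rfl⟩ : ∃ e', e = e' + 1 := ⟨e - 1, by omega⟩
      simp only [pow_succ] at h
      have h' : 3^a' + 3^b' = 3^c' + 3^e' := by omega
      rcases ih a' b' c' e' (by omega) h' with ⟨h1, h2⟩ | ⟨h1, h2⟩
      · exact Or.inl ⟨by omega, by omega⟩
      · exact Or.inr ⟨by omega, by omega⟩

lemma dom_nonempty (d : ℕ) [NeZero d] (S : Finset (ZMod d)) (hS : d < 2 * S.card)
    (l : ZMod d) : ∃ n, n ∈ S ∧ n - l ∈ S := by
  by_contra hc
  push_neg at hc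
  have hdisj : Disjoint S (S.image (fun x => x + l)) := by
    rw [Finset.disjoint_left]
    intro n hn hmem
    obtain ⟨x, hx, rfl⟩ := Finset.mem_image.mp hmem
    exact absurd (by rwa [add_sub_cancel_right]) (fun hh => (hc _ hn hh))
  have hcard : (S ∪ S.image (fun x => x + l)).card = 2 * S.card := by
    rw [Finset.card_union_of_disjoint hdisj,
      Finset.card_image_of_injective _ (add_left_injective l), two_mul]
  have hle : (S ∪ S.image (fun x => x + l)).card ≤ d := by
    have := Finset.card_le_univ (S ∪ S.image (fun x => x + l))
    rwa [ZMod.card] at this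
  omega

lemma key_ne (d : ℕ) (hd : 1 ≤ d) (v₁ v₂ : ℕ) (p q : ℕ) (hpq : p ≠ q) :
    Complex.exp (((v₁ * (2 * Real.pi / d) + p - q : ℝ) : ℂ) * Complex.I)
      + Complex.exp (((v₂ * (2 * Real.pi / d) + q - p : ℝ) : ℂ) * Complex.I) ≠ 0 := by
  intro h0
  set r₁ : ℝ := v₁ * (2 * Real.pi / d) + p - q with hr₁
  set r₂ : ℝ := v₂ * (2 * Real.pi / d) + q - p with hr₂
  have h1 : Complex.exp ((r₁ : ℂ) * Complex.I)
      = Complex.exp (((r₂ + Real.pi : ℝ) : ℂ) * Complex.I) := by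
    have : ((r₂ + Real.pi : ℝ) : ℂ) * Complex.I
        = (r₂ : ℂ) * Complex.I + (Real.pi : ℂ) * Complex.I := by push_cast; ring
    rw [this, Complex.exp_add, Complex.exp_pi_mul_I]
    have := eq_neg_of_add_eq_zero_left h0
    rw [this]
    ring
  rw [Complex.exp_eq_exp_iff_exists_int] at h1
  obtain ⟨j, hj⟩ := h1
  have hre : r₁ = r₂ + Real.pi + j * (2 * Real.pi) := by
    have hC : ((r₁ : ℝ) : ℂ) = ((r₂ + Real.pi + j * (2 * Real.pi) : ℝ) : ℂ) := by
      apply mul_right_cancel₀ Complex.I_ne_zero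
      push_cast
      push_cast at hj
      linear_combination hj
    exact_mod_cast hC
  have hd0 : (d : ℝ) ≠ 0 := Nat.cast_ne_zero.mpr (by omega)
  set M : ℤ := (1 + 2 * j) * d + 2 * ((v₂ : ℤ) - v₁) with hM
  have hmain : 2 * ((p : ℝ) - q) * d = Real.pi * (M : ℝ) := by
    rw [hr₁, hr₂] at hre
    have := congrArg (fun x : ℝ => x * d) hre
    push_cast [hM]
    field_simp at this
    nlinarith [this, Real.pi_gt_three]
  rcases eq_or_ne M 0 with hM0 | hM0
  · rw [hM0] at hmain
    have h2 : ((p:ℝ) - q) * d = 0 := by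
      simp only [Int.cast_zero, mul_zero] at hmain
      linarith
    rcases mul_eq_zero.mp h2 with h | h
    · exact hpq (by exact_mod_cast sub_eq_zero.mp h)
    · exact hd0 h
  · apply irrational_pi
    refine ⟨(2 * ((p : ℚ) - q) * d) / (M : ℚ), ?_⟩
    have hMR : (M : ℝ) ≠ 0 := Int.cast_ne_zero.mpr hM0
    push_cast
    rw [div_eq_iff hMR]
    linarith [hmain]

lemma chi_exp (a : ZMod d) :
    chi d a = Complex.exp (((a.val * (2 * Real.pi / d) : ℝ) : ℂ) * Complex.I) := by
  have hgw : gw d = Complex.exp ((((2 * Real.pi / d) : ℝ) : ℂ) * Complex.I) := by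
    rw [gw]
    congr 1
    push_cast
    ring
  rw [chi, hgw, ← Complex.exp_nat_mul]
  congr 1
  push_cast
  ring

def cexpnt (n : ZMod d) : ℕ := 3 ^ n.val

def phC (n : ZMod d) : ℂ := Complex.exp (((cexpnt d n : ℝ) : ℂ) * Complex.I)

def uCoef (k l n : ZMod d) : ℂ :=
  chi d (-(k * n)) * (phC d n * (starRingEnd ℂ) (phC d (n - l)))

lemma u_exp (k l n : ZMod d) :
    uCoef d k l n = Complex.exp (((((-(k * n)).val : ℕ) * (2 * Real.pi / d)
      + cexpnt d n - cexpnt d (n - l) : ℝ) : ℂ) * Complex.I) := by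
  rw [uCoef, chi_exp, phC, phC]
  rw [← Complex.exp_conj]
  have hconj : (starRingEnd ℂ) (((cexpnt d (n - l) : ℝ) : ℂ) * Complex.I)
      = ((-(cexpnt d (n - l) : ℝ) : ℝ) : ℂ) * Complex.I := by
    rw [_root_.map_mul, Complex.conj_I, Complex.conj_ofReal]
    push_cast
    ring
  rw [hconj, ← Complex.exp_add, ← Complex.exp_add]
  congr 1
  push_cast
  ring

lemma u_ne_zero (k l n : ZMod d) : uCoef d k l n ≠ 0 := by
  rw [u_exp]; exact Complex.exp_ne_zero _

lemma cexpnt_inj : Function.Injective (cexpnt d) := by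
  intro x y h
  have := Nat.pow_right_injective (by norm_num : 2 ≤ 3) h
  exact ZMod.val_injective d this

def Pol (S : Finset (ZMod d)) (k l : ZMod d) : Polynomial ℂ :=
  ∑ n ∈ S.filter (fun n => n - l ∈ S),
    Polynomial.C (uCoef d k l n) * Polynomial.X ^ (cexpnt d n + cexpnt d (n - l))

lemma Pol_coeff (S : Finset (ZMod d)) (k l : ZMod d) (E : ℕ) :
    (Pol d S k l).coeff E
      = ∑ n ∈ (S.filter (fun n => n - l ∈ S)).filter
          (fun n => E = cexpnt d n + cexpnt d (n - l)), uCoef d k l n := by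
  have h1 : (Pol d S k l).coeff E = ∑ n ∈ S.filter (fun n => n - l ∈ S),
      (if E = cexpnt d n + cexpnt d (n - l) then uCoef d k l n else 0) := by
    rw [Pol, Polynomial.finset_sum_coeff]
    refine Finset.sum_congr rfl (fun n _ => ?_)
    rw [Polynomial.coeff_C_mul, Polynomial.coeff_X_pow]
    split_ifs <;> simp
  rw [h1, ← Finset.sum_filter]

lemma Pol_ne (hd : 1 ≤ d) (S : Finset (ZMod d)) (hS : d < 2 * S.card) (k l : ZMod d) :
    Pol d S k l ≠ 0 := by
  classical
  obtain ⟨n₀, hn₀S, hn₀l⟩ := dom_nonempty d S hS l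
  set dom := S.filter (fun n => n - l ∈ S) with hdom
  have hn₀ : n₀ ∈ dom := Finset.mem_filter.mpr ⟨hn₀S, hn₀l⟩
  set m := n₀ - l with hm
  set E := cexpnt d n₀ + cexpnt d m with hE
  set F := dom.filter (fun n => E = cexpnt d n + cexpnt d (n - l)) with hF
  have hn₀F : n₀ ∈ F := Finset.mem_filter.mpr ⟨hn₀, by rw [← hm]⟩
  have hfib : ∀ n ∈ F, n = n₀ ∨ (n = m ∧ n - l = n₀) := by
    intro n hn
    have hEn : E = cexpnt d n + cexpnt d (n - l) := (Finset.mem_filter.mp hn).2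
    have h3 : 3 ^ n₀.val + 3 ^ m.val = 3 ^ n.val + 3 ^ (n - l).val := hEn
    rcases three_pow_add (n₀.val + m.val + n.val + (n - l).val) _ _ _ _ le_rfl h3 with
      ⟨h1, h2⟩ | ⟨h1, h2⟩
    · exact Or.inl (ZMod.val_injective d h1).symm
    · exact Or.inr ⟨(ZMod.val_injective d h2).symm, (ZMod.val_injective d h1).symm⟩
  have hcoeff : (Pol d S k l).coeff E ≠ 0 := by
    rw [Pol_coeff, ← hdom, ← hF]
    by_cases hcase : m ∈ F ∧ m ≠ n₀
    · -- two-element fiber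
      obtain ⟨hmF, hmn⟩ := hcase
      have hml : m - l = n₀ := by
        rcases hfib m hmF with h | ⟨_, h⟩
        · exact absurd h hmn
        · exact h
      have hFeq : F = {n₀, m} := by
        apply Finset.ext
        intro n
        constructor
        · intro hn
          rcases hfib n hn with h | ⟨h, _⟩
          · exact Finset.mem_insert.mpr (Or.inl h)
          · exact Finset.mem_insert.mpr (Or.inr (Finset.mem_singleton.mpr h))
        · intro hn
          rcases Finset.mem_insert.mp hn with h | h
          · rwa [h]
          · rw [Finset.mem_singleton.mp h]; exact hmF
      rw [hFeq, Finset.sum_pair (fun h => hmn h.symm)]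
      have hp : uCoef d k l n₀ = Complex.exp (((((-(k * n₀)).val : ℕ) * (2 * Real.pi / d)
          + cexpnt d n₀ - cexpnt d m : ℝ) : ℂ) * Complex.I) := by
        rw [u_exp, ← hm]
      have hq : uCoef d k l m = Complex.exp (((((-(k * m)).val : ℕ) * (2 * Real.pi / d)
          + cexpnt d m - cexpnt d n₀ : ℝ) : ℂ) * Complex.I) := by
        rw [u_exp, hml]
      rw [hp, hq]
      exact key_ne d hd _ _ _ _ (fun h => hmn (cexpnt_inj d h).symm)
    · -- singleton fiber
      have hFeq : F = {n₀} := by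
        apply Finset.ext
        intro n
        constructor
        · intro hn
          rcases hfib n hn with h | ⟨h, _⟩
          · exact Finset.mem_singleton.mpr h
          · have hmF : m ∈ F := h ▸ hn
            have : n = n₀ := by
              by_contra hne
              exact hcase ⟨hmF, fun hmn => hne (h.trans hmn)⟩
            exact Finset.mem_singleton.mpr this
        · intro hn
          rw [Finset.mem_singleton.mp hn]; exact hn₀F
      rw [hFeq, Finset.sum_singleton]
      exact u_ne_zero d k l n₀
  intro h
  rw [h] at hcoeff
  simp at hcoeff

theorem exists_good (hd : 1 ≤ d) (S : Finset (ZMod d)) (hS : d < 2 * S.card) :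
    ∃ g : ZMod d → ℂ, (∀ n, g n ≠ 0 ↔ n ∈ S) ∧ (∀ k l, Af d g k l ≠ 0) := by
  classical
  set bad : Finset ℝ := (Finset.univ.biUnion
    (fun kl : ZMod d × ZMod d => (Pol d S kl.1 kl.2).roots.toFinset)).image Complex.re with hbad
  obtain ⟨t, ht0, htbad⟩ := (Set.Ioi_infinite (0:ℝ)).exists_notMem_finset bad
  have ht0' : (0:ℝ) < t := ht0
  have htC : (t : ℂ) ≠ 0 := by
    simp only [ne_eq, Complex.ofReal_eq_zero]
    exact ne_of_gt ht0'
  set g : ZMod d → ℂ :=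
    fun n => if n ∈ S then ((t:ℝ):ℂ)^(cexpnt d n) * phC d n else 0 with hg
  have hsupp : ∀ n, g n ≠ 0 ↔ n ∈ S := by
    intro n
    constructor
    · intro h
      by_contra hn
      rw [hg] at h
      simp [hn] at h
    · intro hn
      rw [hg]
      simp only [hn, if_true]
      exact mul_ne_zero (pow_ne_zero _ htC) (Complex.exp_ne_zero _)
  have heval : ∀ k l, Af d g k l = (Pol d S k l).eval (t:ℂ) := by
    intro k l
    rw [Af_eq]
    have hzero : ∀ n ∈ (Finset.univ : Finset (ZMod d)),
        n ∉ S.filter (fun n => n - l ∈ S) →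
        chi d (-(k * n)) * (g n * (starRingEnd ℂ) (g (n - l))) = 0 := by
      intro n _ hn
      rw [Finset.mem_filter] at hn
      push_neg at hn
      by_cases hnS : n ∈ S
      · have : g (n - l) = 0 := by
          rw [hg]; simp [hn hnS]
        rw [this]
        simp
      · have : g n = 0 := by rw [hg]; simp [hnS]
        rw [this]
        simp
    rw [← Finset.sum_subset (Finset.subset_univ (S.filter (fun n => n - l ∈ S))) hzero]
    rw [Pol, Polynomial.eval_finset_sum]
    refine Finset.sum_congr rfl (fun n hn => ?_)
    rw [Finset.mem_filter] at hn
    rw [Polynomial.eval_mul, Polynomial.eval_C, Polynomial.eval_pow, Polynomial.eval_X]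
    have h1 : g n = ((t:ℝ):ℂ)^(cexpnt d n) * phC d n := by rw [hg]; simp [hn.1]
    have h2 : g (n - l) = ((t:ℝ):ℂ)^(cexpnt d (n - l)) * phC d (n - l) := by
      rw [hg]; simp [hn.2]
    rw [h1, h2, _root_.map_mul, map_pow, Complex.conj_ofReal, uCoef, pow_add]
    ring
  refine ⟨g, hsupp, fun k l => ?_⟩
  rw [heval]
  intro h
  have hroot : (t:ℂ) ∈ (Pol d S k l).roots :=
    Polynomial.mem_roots'.mpr ⟨Pol_ne d hd S hS k l, h⟩
  apply htbad
  rw [hbad]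
  apply Finset.mem_image.mpr
  refine ⟨(t:ℂ), ?_, Complex.ofReal_re t⟩
  apply Finset.mem_biUnion.mpr
  exact ⟨(k, l), Finset.mem_univ _, Multiset.mem_toFinset.mpr hroot⟩

end Aux

/-- for any subset `S ⊆ ℤ/dℤ` with `2|S| > d` there is a unit
vector `g` supported exactly on `S` with `⟨g, M^k T^ℓ g⟩ ≠ 0` for all `(k,ℓ)`,
i.e. `rank G(g) = d²`. -/
theorem stmt4 (d : ℕ) [NeZero d] (hd : 1 ≤ d) (S : Finset (ZMod d))
    (hS : d < 2 * S.card) :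
    ∃ g : ZMod d → ℂ,
      (∑ n : ZMod d, ‖g n‖ ^ 2 = 1) ∧
      (∀ n : ZMod d, g n ≠ 0 ↔ n ∈ S) ∧
      (∀ k l : ZMod d, inn d g (modT d k l g) ≠ 0) ∧
      (Gmat d g).rank = d ^ 2 := by
  obtain ⟨g₀, hsupp, hAf⟩ := exists_good d hd S hS
  set N : ℝ := ∑ n : ZMod d, ‖g₀ n‖ ^ 2 with hN
  have hNpos : 0 < N := by
    obtain ⟨n₀, hn₀⟩ := Finset.card_pos.mp (by omega : 0 < S.card)
    refine Finset.sum_pos' (fun i _ => by positivity) ⟨n₀, Finset.mem_univ _, ?_⟩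
    have hne := (hsupp n₀).mpr hn₀
    exact pow_pos (norm_pos_iff.mpr hne) 2
  set s : ℝ := (Real.sqrt N)⁻¹ with hs
  have hsqrtpos : 0 < Real.sqrt N := Real.sqrt_pos.mpr hNpos
  have hspos : 0 < s := by rw [hs]; positivity
  set g : ZMod d → ℂ := fun n => ((s : ℝ) : ℂ) * g₀ n with hgdef
  have hsC : ((s : ℝ) : ℂ) ≠ 0 := by
    simp only [ne_eq, Complex.ofReal_eq_zero]
    exact ne_of_gt hspos
  have hAf' : ∀ k l : ZMod d, Af d g k l ≠ 0 := by
    intro k l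
    have hexp : Af d g k l = (((s:ℝ):ℂ) * (starRingEnd ℂ) ((s:ℝ):ℂ)) * Af d g₀ k l := by
      rw [Af_eq, Af_eq, Finset.mul_sum]
      refine Finset.sum_congr rfl (fun n _ => ?_)
      simp only [hgdef, _root_.map_mul]
      ring
    rw [hexp]
    exact mul_ne_zero (mul_ne_zero hsC (star_ne_zero.mpr hsC)) (hAf k l)
  refine ⟨g, ?_, ?_, fun k l => hAf' k l, rank_full d g hAf'⟩
  · have hterm : ∀ n : ZMod d, ‖g n‖ ^ 2 = s ^ 2 * ‖g₀ n‖ ^ 2 := by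
      intro n
      simp only [hgdef, norm_mul, Complex.norm_real, Real.norm_eq_abs, abs_of_pos hspos]
      ring
    rw [Finset.sum_congr rfl (fun n _ => hterm n), ← Finset.mul_sum, ← hN, hs,
      inv_pow, Real.sq_sqrt hNpos.le]
    exact inv_mul_cancel₀ (ne_of_gt hNpos)
  · intro n
    simp only [hgdef]
    rw [mul_ne_zero_iff]
    constructor
    · intro h; exact (hsupp n).mp h.2
    · intro h; exact ⟨hsC, (hsupp n).mpr h⟩
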